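/- arXiv:1401.1263 — 2 statements merged into one kernel-verified Lean document; each statement's English description precedes it below -/
import Mathlib

section
/- If G is a connected graph of order N, then the normalized Laplacian Estrada index NEE(G) = Σ_{i=1}^N e^{λ_i - 1} satisfies NEE(G) ≥ (N-1) e^{1/(N-1)} + e^{-1}, with equality if and only if G is the complete graph K_N. -/
open Matrix BigOperators
open scoped Classical

noncomputable def normLap {V : Type*} [Fintype V] (G : SimpleGraph V) : Matrix V V ℝ :=
  letI : DecidableRel G.Adj := Classical.decRel _
  let Dh : Matrix V V ℝ := Matrix.diagonal (fun v => (Real.sqrt (G.degree v))⁻¹)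
  Dh * (Matrix.diagonal (fun v => ((G.degree v : ℝ))) - G.adjMatrix ℝ) * Dh

noncomputable def NEE {V : Type*} [Fintype V] [DecidableEq V] (G : SimpleGraph V)
    (hL : (normLap G).IsHermitian) : ℝ :=
  ∑ i, Real.exp (hL.eigenvalues i - 1)

lemma normLap_apply {V : Type*} [Fintype V] (G : SimpleGraph V) (i j : V) :
    normLap G i j = (Real.sqrt (G.degree i))⁻¹ *
      ((if i = j then (G.degree i : ℝ) else 0) - (if G.Adj i j then 1 else 0)) *
      (Real.sqrt (G.degree j))⁻¹ := by
  letI : DecidableRel G.Adj := Classical.decRel _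
  simp [normLap, Matrix.diagonal_mul, Matrix.mul_diagonal, Matrix.sub_apply,
    Matrix.diagonal_apply, SimpleGraph.adjMatrix_apply]

lemma degree_pos {V : Type*} [Fintype V] {G : SimpleGraph V} (hG : G.Connected)
    (h2 : 2 ≤ Fintype.card V) (v : V) : 0 < G.degree v := by
  rw [SimpleGraph.degree_pos_iff_exists_adj]
  obtain ⟨w, hw⟩ := Fintype.exists_ne_of_one_lt_card h2 v
  obtain ⟨p⟩ := hG.preconnected v w
  cases p with
  | nil => exact absurd rfl hw.symm
  | cons h _ => exact ⟨_, h⟩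

lemma normLap_diag {V : Type*} [Fintype V] (G : SimpleGraph V) (i : V)
    (hd : 0 < G.degree i) : normLap G i i = 1 := by
  rw [normLap_apply]
  have h0 : (0:ℝ) < (G.degree i : ℝ) := by exact_mod_cast hd
  rw [if_pos rfl, if_neg (G.irrefl), sub_zero]
  have hs : Real.sqrt (G.degree i) * Real.sqrt (G.degree i) = (G.degree i : ℝ) :=
    Real.mul_self_sqrt h0.le
  have hns : Real.sqrt (G.degree i) ≠ 0 := by positivity
  field_simp
  rw [sq, hs]

lemma trace_normLap {V : Type*} [Fintype V] {G : SimpleGraph V}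
    (hd : ∀ v, 0 < G.degree v) : (normLap G).trace = (Fintype.card V : ℝ) := by
  rw [Matrix.trace]
  rw [Finset.sum_congr rfl (fun i _ => by rw [Matrix.diag_apply, normLap_diag G i (hd i)])]
  simp

lemma sum_eigenvalues {n : Type*} [Fintype n] [DecidableEq n] {A : Matrix n n ℝ}
    (hA : A.IsHermitian) : ∑ i, hA.eigenvalues i = A.trace := by
  have := congrArg Matrix.trace hA.spectral_theorem
  rw [Unitary.conjStarAlgAut_apply, Matrix.trace_mul_comm, ← mul_assoc, Matrix.mem_unitaryGroup_iff'.mp (hA.eigenvectorUnitary).2,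
    one_mul, Matrix.trace_diagonal] at this
  simpa using this.symm

lemma normLap_mulVec_sqrt {V : Type*} [Fintype V] (G : SimpleGraph V)
    (hd : ∀ v, 0 < G.degree v) :
    normLap G *ᵥ (fun v => Real.sqrt (G.degree v)) = 0 := by
  letI : DecidableRel G.Adj := Classical.decRel _
  have hs : ∀ v, Real.sqrt (G.degree v) ≠ 0 := fun v => by
    have : (0:ℝ) < (G.degree v : ℝ) := by exact_mod_cast hd v
    positivity
  simp only [normLap]
  rw [← Matrix.mulVec_mulVec, ← Matrix.mulVec_mulVec]
  have h1 : (Matrix.diagonal (fun v => (Real.sqrt (G.degree v))⁻¹)) *ᵥ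
      (fun v => Real.sqrt (G.degree v)) = fun _ => 1 := by
    ext v; rw [Matrix.mulVec_diagonal]; exact inv_mul_cancel₀ (hs v)
  rw [h1]
  have h2 : (Matrix.diagonal (fun v => ((G.degree v : ℝ))) - G.adjMatrix ℝ) *ᵥ
      (fun _ => (1:ℝ)) = 0 := by
    ext v
    rw [Matrix.sub_mulVec]
    simp [Matrix.mulVec_diagonal, SimpleGraph.adjMatrix_mulVec_apply]
  rw [h2, Matrix.mulVec_zero]

lemma eig_quad {n : Type*} [Fintype n] [DecidableEq n] {A : Matrix n n ℝ}
    (hA : A.IsHermitian) {c : ℝ} (h : A * A = c • A) (i : n) :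
    hA.eigenvalues i ^ 2 = c * hA.eigenvalues i := by
  have hv := hA.mulVec_eigenvectorBasis i
  have h2 : (A * A) *ᵥ ⇑(hA.eigenvectorBasis i)
      = (hA.eigenvalues i ^ 2) • ⇑(hA.eigenvectorBasis i) := by
    rw [← Matrix.mulVec_mulVec, hv, Matrix.mulVec_smul, hv, smul_smul, sq]
  rw [h, Matrix.smul_mulVec, hv, smul_smul] at h2
  have hne : ⇑(hA.eigenvectorBasis i) ≠ 0 := by
    have := hA.eigenvectorBasis.orthonormal.ne_zero i
    intro hc; apply this
    ext j; exact congrFun hc j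
  obtain ⟨j, hj⟩ := Function.ne_iff.mp hne
  have := congrFun h2 j
  simp only [Pi.smul_apply, smul_eq_mul] at this
  exact (mul_right_cancel₀ hj this).symm

lemma quad_of_eigs {n : Type*} [Fintype n] [DecidableEq n] {A : Matrix n n ℝ}
    (hA : A.IsHermitian) {c : ℝ} (h : ∀ i, hA.eigenvalues i ^ 2 = c * hA.eigenvalues i) :
    A * A = c • A := by
  have hst := hA.spectral_theorem
  rw [Unitary.conjStarAlgAut_apply] at hst
  set U : Matrix n n ℝ := (hA.eigenvectorUnitary : Matrix n n ℝ)
  have hU : star U * U = 1 := Matrix.mem_unitaryGroup_iff'.mp (hA.eigenvectorUnitary).2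
  set D : Matrix n n ℝ := Matrix.diagonal (RCLike.ofReal ∘ hA.eigenvalues)
  have hDD : D * D = c • D := by
    ext i j
    by_cases hij : i = j
    · subst hij
      simp [D, Matrix.diagonal_mul, Matrix.diagonal_apply_eq, ← sq, h i]
    · simp [D, Matrix.diagonal_mul, Matrix.diagonal_apply_ne _ hij]
  calc A * A = U * (D * ((star U * U) * (D * star U))) := by
        rw [hst]; simp only [Matrix.mul_assoc]
    _ = U * (D * D) * star U := by
        rw [hU, one_mul]; simp only [Matrix.mul_assoc]
    _ = c • A := by rw [hDD, hst]; simp only [Matrix.mul_smul, Matrix.smul_mul]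

lemma top_degree' {N : ℕ} (h2 : 2 ≤ N) (v : Fin N)
    {inst : Fintype ((⊤ : SimpleGraph (Fin N)).neighborSet v)} :
    ((@SimpleGraph.degree _ ⊤ v inst : ℕ) : ℝ) = (N : ℝ) - 1 := by
  rw [Subsingleton.elim inst (SimpleGraph.neighborSetFintype ⊤ v)]
  rw [SimpleGraph.complete_graph_degree]
  simp only [Fintype.card_fin]
  have : (1:ℕ) ≤ N := by omega
  push_cast [Nat.cast_sub this]
  ring

lemma normLap_top_apply {N : ℕ} (h2 : 2 ≤ N) (i j : Fin N) :
    normLap (⊤ : SimpleGraph (Fin N)) i j =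
      if i = j then 1 else -(((N:ℝ) - 1)⁻¹) := by
  have hN1 : (0:ℝ) < (N:ℝ) - 1 := by
    have : (2:ℝ) ≤ (N:ℝ) := by exact_mod_cast h2
    linarith
  by_cases hij : i = j
  · subst hij
    rw [if_pos rfl, normLap_diag]
    rw [SimpleGraph.degree_pos_iff_exists_adj]
    obtain ⟨w, hw⟩ := Fintype.exists_ne_of_one_lt_card (by simp; omega) i
    exact ⟨w, Ne.symm hw⟩
  · rw [if_neg hij, normLap_apply, if_neg hij]
    rw [if_pos (by exact hij : (⊤ : SimpleGraph (Fin N)).Adj i j)]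
    rw [top_degree' h2, top_degree' h2]
    rw [← Real.sqrt_inv]
    have : Real.sqrt (((N:ℝ)-1)⁻¹) * Real.sqrt (((N:ℝ)-1)⁻¹) = ((N:ℝ)-1)⁻¹ :=
      Real.mul_self_sqrt (by positivity)
    nlinarith [this]

lemma normLap_top_sq {N : ℕ} (h2 : 2 ≤ N) :
    normLap (⊤ : SimpleGraph (Fin N)) * normLap (⊤ : SimpleGraph (Fin N)) =
      ((N:ℝ)/((N:ℝ)-1)) • normLap (⊤ : SimpleGraph (Fin N)) := by
  have hN1 : (0:ℝ) < (N:ℝ) - 1 := by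
    have : (2:ℝ) ≤ (N:ℝ) := by exact_mod_cast h2
    linarith
  set c : ℝ := (N:ℝ)/((N:ℝ)-1) with hc
  set b : ℝ := -((N:ℝ) - 1)⁻¹ with hb
  set J : Matrix (Fin N) (Fin N) ℝ := Matrix.of (fun _ _ => (1:ℝ)) with hJ
  have hrep : normLap (⊤ : SimpleGraph (Fin N)) = c • (1 : Matrix (Fin N) (Fin N) ℝ) + b • J := by
    ext i j
    rw [normLap_top_apply h2 i j]
    by_cases hij : i = j
    · subst hij
      simp only [if_pos rfl, Matrix.add_apply, Matrix.smul_apply, Matrix.one_apply_eq, hJ,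
        Matrix.of_apply, smul_eq_mul, mul_one]
      have hne : (N:ℝ) - 1 ≠ 0 := ne_of_gt hN1
      rw [hc, hb]; field_simp
      rw [if_pos trivial]
      ring
    · simp only [if_neg hij, Matrix.add_apply, Matrix.smul_apply, Matrix.one_apply_ne hij, hJ,
        Matrix.of_apply, smul_eq_mul, mul_one, mul_zero, zero_add, hb]
  have hJJ : J * J = (N:ℝ) • J := by
    ext i j
    simp [hJ, Matrix.mul_apply, Matrix.smul_apply]
  rw [hrep]
  rw [add_mul, mul_add, mul_add]
  simp only [Matrix.smul_mul, Matrix.mul_smul, Matrix.one_mul, Matrix.mul_one, hJJ, smul_smul,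
    smul_add]
  rw [add_assoc, ← add_smul, ← add_smul]
  have hco : b * c + (c * b + b * (b * (N:ℝ))) = c * b := by
    rw [hc, hb]; field_simp; ring
  rw [hco]

lemma triple_aux {V : Type*} {G : SimpleGraph V} (b : V) :
    ∀ n (a : V) (p : G.Walk a b), p.length ≤ n → a ≠ b → ¬ G.Adj a b →
    ∃ x y z, G.Adj x y ∧ G.Adj y z ∧ ¬ G.Adj x z ∧ x ≠ z := by
  intro n
  induction n with
  | zero =>
    intro a p hl hab _
    cases p with
    | nil => exact absurd rfl hab
    | cons h q => simp at hl
  | succ n ih =>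
    intro a p hl hab hnadj
    cases p with
    | nil => exact absurd rfl hab
    | cons h q =>
      rename_i w
      cases q with
      | nil => exact absurd h hnadj
      | cons h2 q2 =>
        rename_i u
        by_cases hau : a = u
        · subst hau
          by_cases hu : a = b
          · exact absurd rfl (hu ▸ hab)
          · exact ih a q2 (by simp at hl ⊢; omega) hu hnadj
        · by_cases h3 : G.Adj a u
          · exact ih a (SimpleGraph.Walk.cons h3 q2) (by simp at hl ⊢; omega) hab hnadj
          · exact ⟨a, w, u, h, h2, h3, hau⟩

lemma exists_triple {V : Type*} [Fintype V] {G : SimpleGraph V} (hG : G.Connected)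
    (hne : G ≠ ⊤) :
    ∃ x y z, G.Adj x y ∧ G.Adj y z ∧ ¬ G.Adj x z ∧ x ≠ z := by
  have : ∃ a b, a ≠ b ∧ ¬ G.Adj a b := by
    by_contra hc
    push_neg at hc
    apply hne
    ext a b
    simp only [SimpleGraph.top_adj]
    exact ⟨fun h => G.ne_of_adj h, fun h => hc a b h⟩
  obtain ⟨a, b, hab, hnadj⟩ := this
  obtain ⟨p⟩ := hG.preconnected a b
  exact triple_aux b p.length a p le_rfl hab hnadj

lemma normLap_offdiag_nonpos {V : Type*} [Fintype V] (G : SimpleGraph V) {i j : V}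
    (hij : i ≠ j) : normLap G i j ≤ 0 := by
  rw [normLap_apply, if_neg hij]
  have h1 : (0:ℝ) ≤ (Real.sqrt (G.degree i))⁻¹ := by positivity
  have h2 : (0:ℝ) ≤ (Real.sqrt (G.degree j))⁻¹ := by positivity
  by_cases h : G.Adj i j
  · rw [if_pos h]; nlinarith
  · rw [if_neg h]; simp

lemma normLap_adj_neg {V : Type*} [Fintype V] {G : SimpleGraph V} {i j : V}
    (h : G.Adj i j) (hdi : 0 < G.degree i) (hdj : 0 < G.degree j) :
    normLap G i j < 0 := by
  have hij : i ≠ j := G.ne_of_adj h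
  rw [normLap_apply, if_neg hij, if_pos h]
  have h1 : (0:ℝ) < (Real.sqrt (G.degree i))⁻¹ := by
    have : (0:ℝ) < (G.degree i : ℝ) := by exact_mod_cast hdi
    positivity
  have h2 : (0:ℝ) < (Real.sqrt (G.degree j))⁻¹ := by
    have : (0:ℝ) < (G.degree j : ℝ) := by exact_mod_cast hdj
    positivity
  nlinarith

lemma normLap_nonadj {V : Type*} [Fintype V] (G : SimpleGraph V) {i j : V}
    (hij : i ≠ j) (h : ¬ G.Adj i j) : normLap G i j = 0 := by
  rw [normLap_apply, if_neg hij, if_neg h]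
  ring

lemma no_triple {V : Type*} [Fintype V] {G : SimpleGraph V} (hd : ∀ v, 0 < G.degree v)
    {c : ℝ} (hq : normLap G * normLap G = c • normLap G)
    {x y z : V} (hxy : G.Adj x y) (hyz : G.Adj y z) (hxz : ¬ G.Adj x z)
    (hxzne : x ≠ z) : False := by
  have hLxz : normLap G x z = 0 := normLap_nonadj G hxzne hxz
  have h0 : ∑ k, normLap G x k * normLap G k z = 0 := by
    have := congrFun (congrFun hq x) z
    rw [Matrix.mul_apply] at this
    rw [this, Matrix.smul_apply, hLxz, smul_zero]
  have hnonneg : ∀ k ∈ Finset.univ, 0 ≤ normLap G x k * normLap G k z := by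
    intro k _
    by_cases hkx : k = x
    · subst hkx; rw [hLxz, mul_zero]
    · by_cases hkz : k = z
      · subst hkz; rw [hLxz, zero_mul]
      · have a1 := normLap_offdiag_nonpos G (fun h => hkx h.symm : x ≠ k)
        have a2 := normLap_offdiag_nonpos G (hkz : k ≠ z)
        nlinarith
  have hall := (Finset.sum_eq_zero_iff_of_nonneg hnonneg).mp h0
  have hy := hall y (Finset.mem_univ y)
  have h1 : normLap G x y < 0 := normLap_adj_neg hxy (hd x) (hd y)
  have h2 : normLap G y z < 0 := normLap_adj_neg hyz (hd y) (hd z)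
  nlinarith

lemma count_spec {N : ℕ} (h2 : 2 ≤ N) (lam : Fin N → ℝ)
    (hquad : ∀ i, lam i ^ 2 = ((N:ℝ)/((N:ℝ)-1)) * lam i)
    (hsum : ∑ i, lam i = (N:ℝ)) :
    ∑ i, Real.exp (lam i - 1) = ((N:ℝ)-1) * Real.exp (1/((N:ℝ)-1)) + Real.exp (-1) := by
  have hN1 : (0:ℝ) < (N:ℝ) - 1 := by
    have : (2:ℝ) ≤ (N:ℝ) := by exact_mod_cast h2
    linarith
  have hne : (N:ℝ) - 1 ≠ 0 := ne_of_gt hN1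
  set c : ℝ := (N:ℝ)/((N:ℝ)-1) with hc
  have hcpos : 0 < c := by positivity
  have hval : ∀ i, lam i = 0 ∨ lam i = c := by
    intro i
    have h := hquad i
    have : lam i * (lam i - c) = 0 := by nlinarith [h]
    rcases mul_eq_zero.mp this with h | h
    · exact Or.inl h
    · exact Or.inr (by linarith)
  classical
  set T : Finset (Fin N) := Finset.univ.filter (fun i => lam i = 0) with hT
  have hsplit : ∀ (f : Fin N → ℝ), ∑ i, f i =
      ∑ i ∈ T, f i + ∑ i ∈ Finset.univ.filter (fun i => ¬ lam i = 0), f i := by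
    intro f
    rw [hT, Finset.sum_filter_add_sum_filter_not]
  have hcardsum : T.card + (Finset.univ.filter (fun i => ¬ lam i = 0)).card = N := by
    rw [hT, Finset.card_filter_add_card_filter_not]
    simp
  have hsum2 : ((Finset.univ.filter (fun i => ¬ lam i = 0)).card : ℝ) * c = (N:ℝ) := by
    have := hsplit lam
    rw [hsum] at this
    rw [Finset.sum_congr rfl (fun i hi => (Finset.mem_filter.mp hi).2 : ∀ i ∈ T, lam i = 0),
      Finset.sum_const_zero, zero_add] at this
    rw [Finset.sum_congr rfl (fun i hi => by
      rcases hval i with h | h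
      · exact absurd h (Finset.mem_filter.mp hi).2
      · exact h)] at this
    rw [Finset.sum_const, nsmul_eq_mul] at this
    linarith [this]
  have hcard2 : ((Finset.univ.filter (fun i => ¬ lam i = 0)).card : ℝ) = (N:ℝ) - 1 := by
    rw [hc] at hsum2
    field_simp at hsum2
    have hNpos : (0:ℝ) < (N:ℝ) := by linarith
    have := mul_right_cancel₀ (ne_of_gt hNpos) (by rw [hsum2] :
      ((Finset.univ.filter (fun i => ¬ lam i = 0)).card : ℝ) * (N:ℝ) = ((N:ℝ)-1) * (N:ℝ))
    exact this
  have hcard1 : (T.card : ℝ) = 1 := by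
    have : (T.card : ℝ) + ((Finset.univ.filter (fun i => ¬ lam i = 0)).card : ℝ) = (N:ℝ) := by
      exact_mod_cast hcardsum
    linarith [hcard2]
  have e1 : ∑ i ∈ T, Real.exp (lam i - 1) = (T.card : ℝ) * Real.exp (-1) := by
    rw [Finset.sum_congr rfl (g := fun _ => Real.exp (-1)) (fun i hi => by
      rw [(Finset.mem_filter.mp hi).2, zero_sub]), Finset.sum_const, nsmul_eq_mul]
  have e2 : ∑ i ∈ Finset.univ.filter (fun i => ¬ lam i = 0), Real.exp (lam i - 1)
      = ((Finset.univ.filter (fun i => ¬ lam i = 0)).card : ℝ) * Real.exp (c - 1) := by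
    rw [Finset.sum_congr rfl (g := fun _ => Real.exp (c - 1)) (fun i hi => by
      rcases hval i with h | h
      · exact absurd h (Finset.mem_filter.mp hi).2
      · rw [h]), Finset.sum_const, nsmul_eq_mul]
  rw [hsplit (fun i => Real.exp (lam i - 1)), e1, e2, hcard1, hcard2]
  have : c - 1 = 1/((N:ℝ)-1) := by rw [hc]; field_simp; ring
  rw [this]
  ring

/-- For a connected graph of order N, NEE ≥ (N-1)e^{1/(N-1)} + e^{-1},
with equality iff G is the complete graph. -/
theorem NEE_lower_bound_connected {N : ℕ} (G : SimpleGraph (Fin N))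
    (hG : G.Connected) (hL : (normLap G).IsHermitian) :
    NEE G hL ≥ ((N : ℝ) - 1) * Real.exp (1 / ((N : ℝ) - 1)) + Real.exp (-1) ∧
    (NEE G hL = ((N : ℝ) - 1) * Real.exp (1 / ((N : ℝ) - 1)) + Real.exp (-1) ↔
      G = ⊤) := by
  have hNnonempty : Nonempty (Fin N) := hG.nonempty
  have hN0 : 1 ≤ N := by
    obtain ⟨v⟩ := hNnonempty
    have := v.pos
    omega
  by_cases h1 : N = 1
  · subst h1
    have hdeg0 : ∀ v : Fin 1, G.degree v = 0 := by
      intro v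
      by_contra h
      obtain ⟨w, hw⟩ := (SimpleGraph.degree_pos_iff_exists_adj G v).mp (Nat.pos_of_ne_zero h)
      exact G.ne_of_adj hw (Subsingleton.elim v w)
    have hz : normLap G = 0 := by
      ext i j
      rw [normLap_apply, hdeg0, hdeg0]
      simp
    have heig : ∀ i, hL.eigenvalues i = 0 := by
      intro i
      have htr0 : (normLap G).trace = 0 := by rw [hz]; simp
      have hs := sum_eigenvalues hL
      rw [htr0] at hs
      rw [← Fintype.sum_subsingleton (fun j => hL.eigenvalues j) i]
      exact hs
    have hNEE : NEE G hL = Real.exp (-1) := by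
      rw [NEE]
      rw [Finset.sum_congr rfl (fun i _ => by rw [heig i, zero_sub])]
      simp
    refine ⟨?_, ?_, ?_⟩
    · rw [hNEE]; norm_num
    · intro _
      ext a b
      have hab : a = b := Subsingleton.elim a b
      subst hab
      simp
    · intro _
      rw [hNEE]; norm_num
  · have h2 : 2 ≤ N := by omega
    have hd : ∀ v, 0 < G.degree v := degree_pos hG (by simpa using h2)
    have hN1 : (0:ℝ) < (N:ℝ) - 1 := by
      have : (2:ℝ) ≤ (N:ℝ) := by exact_mod_cast h2
      linarith
    have hnz : (N:ℝ) - 1 ≠ 0 := ne_of_gt hN1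
    set c : ℝ := (N:ℝ)/((N:ℝ)-1) with hc
    have htr : ∑ i, hL.eigenvalues i = (N:ℝ) := by
      rw [sum_eigenvalues hL, trace_normLap hd]; simp
    have hdet : (normLap G).det = 0 := by
      rw [← Matrix.exists_mulVec_eq_zero_iff]
      refine ⟨fun v => Real.sqrt (G.degree v), ?_, normLap_mulVec_sqrt G hd⟩
      intro hcon
      obtain ⟨v⟩ := hNnonempty
      have h0 := congrFun hcon v
      have hpos : 0 < Real.sqrt (G.degree v) :=
        Real.sqrt_pos.mpr (by exact_mod_cast hd v)
      rw [Pi.zero_apply] at h0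
      linarith [h0, hpos]
    have hprod : ∏ i, hL.eigenvalues i = 0 := by
      have := hL.det_eq_prod_eigenvalues
      rw [hdet] at this
      simpa using this.symm
    obtain ⟨i₀, -, hi₀⟩ := Finset.prod_eq_zero_iff.mp hprod
    have hcard_erase : (((Finset.univ : Finset (Fin N)).erase i₀).card : ℝ) = (N:ℝ) - 1 := by
      rw [Finset.card_erase_of_mem (Finset.mem_univ i₀)]
      rw [Finset.card_univ, Fintype.card_fin]
      push_cast [Nat.cast_sub hN0]
      ring
    have hsum_erase : ∑ i ∈ Finset.univ.erase i₀, hL.eigenvalues i = (N:ℝ) := by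
      have h := Finset.sum_erase_add Finset.univ hL.eigenvalues (Finset.mem_univ i₀)
      rw [htr, hi₀] at h
      linarith
    have h3 : ((N:ℝ)-1) * c = (N:ℝ) := by rw [hc]; field_simp
    have h4 : c - 1 = 1/((N:ℝ)-1) := by rw [hc]; field_simp; ring
    have hkey : NEE G hL - (((N : ℝ) - 1) * Real.exp (1 / ((N : ℝ) - 1)) + Real.exp (-1))
        = ∑ i ∈ Finset.univ.erase i₀,
          (Real.exp (hL.eigenvalues i - 1) - Real.exp (c-1) * (hL.eigenvalues i - c + 1)) := by
      rw [Finset.sum_sub_distrib]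
      have hA : ∑ i ∈ Finset.univ.erase i₀, Real.exp (hL.eigenvalues i - 1)
          = NEE G hL - Real.exp (-1) := by
        have h := Finset.sum_erase_add Finset.univ (fun i => Real.exp (hL.eigenvalues i - 1))
          (Finset.mem_univ i₀)
        have hNEEeq : NEE G hL = ∑ i, Real.exp (hL.eigenvalues i - 1) := rfl
        simp only [hi₀, zero_sub] at h
        rw [hNEEeq]
        linarith
      have hB : ∑ i ∈ Finset.univ.erase i₀, Real.exp (c-1) * (hL.eigenvalues i - c + 1)
          = ((N:ℝ)-1) * Real.exp (1/((N:ℝ)-1)) := by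
        rw [← Finset.mul_sum]
        have hs : ∑ i ∈ Finset.univ.erase i₀, (hL.eigenvalues i - c + 1)
            = (N:ℝ) - ((N:ℝ)-1)*c + ((N:ℝ)-1) := by
          rw [Finset.sum_add_distrib, Finset.sum_sub_distrib, hsum_erase, Finset.sum_const,
            Finset.sum_const, nsmul_eq_mul, nsmul_eq_mul, hcard_erase]
          ring
        rw [hs, h3, ← h4]
        ring
      rw [hA, hB]
      ring
    have hFnonneg : ∀ i ∈ Finset.univ.erase i₀,
        0 ≤ Real.exp (hL.eigenvalues i - 1) - Real.exp (c-1) * (hL.eigenvalues i - c + 1) := by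
      intro i _
      have hle := Real.add_one_le_exp (hL.eigenvalues i - c)
      have hrw : Real.exp (hL.eigenvalues i - 1) = Real.exp (c-1) * Real.exp (hL.eigenvalues i - c) := by
        rw [← Real.exp_add]; ring_nf
      rw [hrw]
      have hep : 0 < Real.exp (c-1) := Real.exp_pos _
      nlinarith
    have hineq : 0 ≤ ∑ i ∈ Finset.univ.erase i₀,
        (Real.exp (hL.eigenvalues i - 1) - Real.exp (c-1) * (hL.eigenvalues i - c + 1)) :=
      Finset.sum_nonneg hFnonneg
    refine ⟨by linarith [hkey, hineq], ?_, ?_⟩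
    · intro heq
      have hzero : ∑ i ∈ Finset.univ.erase i₀,
          (Real.exp (hL.eigenvalues i - 1) - Real.exp (c-1) * (hL.eigenvalues i - c + 1)) = 0 := by
        rw [← hkey, heq]
        ring
      have hall := (Finset.sum_eq_zero_iff_of_nonneg hFnonneg).mp hzero
      have hlc : ∀ i, hL.eigenvalues i ^ 2 = c * hL.eigenvalues i := by
        intro i
        by_cases hii : i = i₀
        · subst hii; rw [hi₀]; ring
        · have hmem : i ∈ Finset.univ.erase i₀ := Finset.mem_erase.mpr ⟨hii, Finset.mem_univ i⟩
          have hFi := hall i hmem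
          have hic : hL.eigenvalues i = c := by
            by_contra hne2
            have hlt := Real.add_one_lt_exp (x := hL.eigenvalues i - c)
              (by intro h0; apply hne2; linarith)
            have hrw : Real.exp (hL.eigenvalues i - 1)
                = Real.exp (c-1) * Real.exp (hL.eigenvalues i - c) := by
              rw [← Real.exp_add]; ring_nf
            rw [hrw] at hFi
            have hep : 0 < Real.exp (c-1) := Real.exp_pos _
            nlinarith
          rw [hic]; ring
      have hq := quad_of_eigs hL hlc
      by_contra hnot
      obtain ⟨x, y, z, hxy, hyz, hxz, hxzne⟩ := exists_triple hG hnot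
      exact no_triple hd hq hxy hyz hxz hxzne
    · intro htop
      subst htop
      have hq := normLap_top_sq h2
      have hquad := fun i => eig_quad hL hq i
      have hNEEeq : NEE ⊤ hL = ∑ i, Real.exp (hL.eigenvalues i - 1) := rfl
      rw [hNEEeq]
      exact count_spec h2 hL.eigenvalues hquad htr
end

section
/- The (m+1)×(m+1) matrix B with B_{11}=1, B_{1j} = -1/(m+2) for j ≥ 2, B_{i1} = -1 for i ≥ 2, B_{ii} = 1 for i ≥ 2, and all other entries 0, satisfies det(λ I - B) = (λ-1)^{m-1}·((λ-1)^2 - m/(m+2)), and hence the (1,1) entry of (λI - B)^{-1} equals (m+2)(λ-1)/(2 + (m+2)λ(λ-2)) whenever λ ∉ {0, 2} makes λI - B invertible. -/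
open Matrix

/-- The (m+1)×(m+1) matrix B with B₀₀ = 1, B₀ⱼ = -1/(m+2) for j ≠ 0,
Bᵢ₀ = -1 for i ≠ 0, Bᵢᵢ = 1 for i ≠ 0, and all other entries 0. -/
noncomputable def Bmat (m : ℕ) : Matrix (Fin (m + 1)) (Fin (m + 1)) ℝ :=
  Matrix.of fun i j =>
    if i = 0 ∧ j = 0 then 1
    else if i = 0 then -(1 / ((m : ℝ) + 2))
    else if j = 0 then -1
    else if i = j then 1 else 0

lemma Bmat_det (m : ℕ) (hm : 1 ≤ m) (lam : ℝ) :
    (lam • (1 : Matrix (Fin (m + 1)) (Fin (m + 1)) ℝ) - Bmat m).det =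
      (lam - 1) ^ (m - 1) * ((lam - 1) ^ 2 - (m : ℝ) / ((m : ℝ) + 2)) := by
  obtain ⟨k, rfl⟩ : ∃ k, m = k + 1 := ⟨m - 1, (Nat.succ_pred_eq_of_pos hm).symm⟩
  by_cases hμ : lam - 1 = 0
  · -- lam = 1
    have hlam : lam = 1 := by linarith
    subst hlam
    rcases Nat.eq_zero_or_pos k with hk | hk
    · subst hk
      rw [show ((1:ℝ) • (1 : Matrix (Fin 2) (Fin 2) ℝ) - Bmat 1).det =
          _ from det_fin_two _]
      simp [Bmat, Matrix.one_apply]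
    · have key : ∀ i : Fin (k+1+1), i ≠ 0 →
          ((1:ℝ) • (1 : Matrix (Fin (k+1+1)) (Fin (k+1+1)) ℝ) - Bmat (k+1)) i =
          fun j => if j = 0 then 1 else 0 := by
        intro i hi
        funext j
        by_cases hj : j = 0
        · subst hj; simp [Bmat, Matrix.one_apply, hi]
        · by_cases hij : i = j
          · subst hij; simp [Bmat, Matrix.one_apply, hi, hj]
          · simp [Bmat, Matrix.one_apply, hi, hj, hij]
      have h1 : ((⟨1, by omega⟩ : Fin (k+1+1))) ≠ 0 := by simp [Fin.ext_iff]
      have h2 : ((⟨2, by omega⟩ : Fin (k+1+1))) ≠ 0 := by simp [Fin.ext_iff]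
      rw [det_zero_of_row_eq (i := (⟨1, by omega⟩ : Fin (k+1+1)))
        (j := ⟨2, by omega⟩) (by simp [Fin.ext_iff]) ((key _ h1).trans (key _ h2).symm)]
      rw [show (1:ℝ) - 1 = 0 by ring, zero_pow (by omega)]
      ring
  · -- lam ≠ 1 : Weinstein–Aronszajn
    set n := k + 1 + 1
    set μ : ℝ := lam - 1 with hμdef
    set C : Matrix (Fin n) (Fin 2) ℝ :=
      Matrix.of fun i s => if s = 0 then (if i = 0 then 1 else 0)
        else (if i = 0 then 0 else 1) with hC
    set R : Matrix (Fin 2) (Fin n) ℝ :=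
      Matrix.of fun s j => if s = 0 then (if j = 0 then 0 else 1 / ((k:ℝ)+1+2))
        else (if j = 0 then 1 else 0) with hR
    have hfact : lam • (1 : Matrix (Fin n) (Fin n) ℝ) - Bmat (k+1)
        = μ • (1 + (μ⁻¹ • C) * R) := by
      ext i j
      have hμ' : lam - 1 ≠ 0 := hμ
      simp only [Matrix.sub_apply, Matrix.smul_apply, Matrix.add_apply, Matrix.mul_apply,
        Matrix.one_apply, Bmat, hC, hR, Matrix.of_apply, Fin.sum_univ_two, smul_eq_mul]
      by_cases hi : i = 0 <;> by_cases hj : j = 0 <;> by_cases hij : i = j <;>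
        simp [hi, hj, hij, hμdef, eq_comm] <;> (try push_cast) <;> (try field_simp) <;>
        (first | ring1 | tauto | (left; push_cast; ring1) | norm_num)
    rw [hfact, det_smul, det_one_add_mul_comm]
    have hRC : R * (μ⁻¹ • C) =
        Matrix.of fun s t : Fin 2 =>
          if s = 0 then (if t = 0 then 0 else μ⁻¹ * ((k:ℝ)+1) / ((k:ℝ)+1+2))
          else (if t = 0 then μ⁻¹ else 0) := by
      ext s t
      simp only [Matrix.mul_apply, Matrix.smul_apply, hC, hR, Matrix.of_apply, smul_eq_mul]
      fin_cases s <;> fin_cases t <;>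
        simp [Fin.sum_univ_succ, Fin.succ_ne_zero, Finset.sum_const, Finset.card_univ,
          Finset.sum_ite, Finset.filter_ne', Finset.card_erase_of_mem, n] <;>
        (try push_cast) <;> (try field_simp) <;>
        (first | ring1 | tauto | (left; push_cast; ring1) | norm_num)
    rw [hRC]
    rw [det_fin_two]
    simp only [Matrix.add_apply, Matrix.one_apply, Matrix.of_apply]
    norm_num
    have hk3 : ((k:ℝ) + 3) ≠ 0 := by positivity
    have hpow : μ ^ n = μ ^ k * μ ^ 2 := by rw [← pow_add]
    rw [hpow]
    field_simp

/-- det(λI - B) = (λ-1)^{m-1}((λ-1)² - m/(m+2)), and whenever λ ∉ {0,2} makes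
λI - B invertible, the (1,1) entry of (λI - B)⁻¹ is
(m+2)(λ-1)/(2 + (m+2)λ(λ-2)). -/
theorem Bmat_det_and_inv_entry (m : ℕ) (hm : 1 ≤ m) (lam : ℝ) :
    (lam • (1 : Matrix (Fin (m + 1)) (Fin (m + 1)) ℝ) - Bmat m).det =
      (lam - 1) ^ (m - 1) * ((lam - 1) ^ 2 - (m : ℝ) / ((m : ℝ) + 2)) ∧
    (lam ≠ 0 → lam ≠ 2 →
      IsUnit (lam • (1 : Matrix (Fin (m + 1)) (Fin (m + 1)) ℝ) - Bmat m) →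
      (lam • (1 : Matrix (Fin (m + 1)) (Fin (m + 1)) ℝ) - Bmat m)⁻¹ 0 0 =
        ((m : ℝ) + 2) * (lam - 1) / (2 + ((m : ℝ) + 2) * lam * (lam - 2))) := by
  have hdet := Bmat_det m hm lam
  refine ⟨hdet, fun _ _ hU => ?_⟩
  set M := lam • (1 : Matrix (Fin (m + 1)) (Fin (m + 1)) ℝ) - Bmat m with hM
  have hdet0 : M.det ≠ 0 := ((isUnit_iff_isUnit_det _).mp hU).ne_zero
  -- the adjugate (0,0) entry
  have hadj : M.adjugate 0 0 = (lam - 1) ^ m := by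
    rw [adjugate_apply]
    rw [det_of_lowerTriangular _ ?_]
    · rw [Fin.prod_univ_succ]
      have h00 : (M.updateRow 0 (Pi.single 0 1)) 0 0 = 1 := by
        simp [Matrix.updateRow_self]
      rw [h00, one_mul]
      have hdiag : ∀ i : Fin m, (M.updateRow 0 (Pi.single 0 1)) i.succ i.succ = lam - 1 := by
        intro i
        rw [Matrix.updateRow_ne (Fin.succ_ne_zero i)]
        simp [hM, Bmat, Matrix.one_apply, Fin.succ_ne_zero i]
      rw [Finset.prod_congr rfl (fun i _ => hdiag i)]
      simp
    · intro i j hij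
      have hij' : (i : Fin (m+1)) < j := hij
      by_cases hi : i = 0
      · subst hi
        rw [Matrix.updateRow_self]
        have : j ≠ 0 := by
          intro h; subst h; exact absurd hij' (lt_irrefl _)
        simp [Pi.single_apply, Ne.symm this, this]
      · rw [Matrix.updateRow_ne hi]
        have h1 : i ≠ j := ne_of_lt hij'
        have h2 : j ≠ 0 := by
          intro h; subst h; exact absurd hij' (by simp)
        simp [hM, Bmat, Matrix.one_apply, hi, h1, h2]
  have hm2 : ((m:ℝ) + 2) ≠ 0 := by positivity
  set a : ℝ := lam - 1 with ha
  set D : ℝ := 2 + ((m:ℝ) + 2) * lam * (lam - 2) with hD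
  have hfac : a ^ 2 - (m:ℝ) / ((m:ℝ) + 2) = D / ((m:ℝ) + 2) := by
    rw [hD, ha]; field_simp; ring
  have h1 : a ^ (m - 1) ≠ 0 := by
    intro h; exact hdet0 (by rw [hdet, h, zero_mul])
  have hDne : D ≠ 0 := by
    intro h
    exact hdet0 (by rw [hdet, hfac, h, zero_div, mul_zero])
  have hpow : a ^ m = a ^ (m - 1) * a := by
    rw [← pow_succ]; congr 1; omega
  rw [inv_def, Matrix.smul_apply, hadj, Ring.inverse_eq_inv', smul_eq_mul, hdet, hfac, hpow]
  field_simp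
end
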